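/- Let A ∈ I with δ₁(A) = 𝒪. Then μ_𝒪(A) = N(δ₂(A)), i.e. the number of right cosets U·B contained in U A U with 𝔤(B) = 𝒪 equals the norm of the ideal generated by det A. -/

import Mathlib

open Matrix

/-- The right coset `U·B` with respect to the unimodular group
`U = GL₂(𝒪)` (matrices over `𝒪` whose determinant is a unit). -/
def rightCoset' {O : Type*} [CommRing O] (B : Matrix (Fin 2) (Fin 2) O) :
    Set (Matrix (Fin 2) (Fin 2) O) :=
  {X | ∃ P : Matrix (Fin 2) (Fin 2) O, IsUnit P.det ∧ X = P * B}

/-- The double coset `U A U`. -/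
def doubleCoset' {O : Type*} [CommRing O] (A : Matrix (Fin 2) (Fin 2) O) :
    Set (Matrix (Fin 2) (Fin 2) O) :=
  {X | ∃ P Q : Matrix (Fin 2) (Fin 2) O, IsUnit P.det ∧ IsUnit Q.det ∧ X = P * A * Q}

/-- The first determinantal divisor `δ₁(A)`. -/
def delta1 {O : Type*} [CommRing O] (A : Matrix (Fin 2) (Fin 2) O) : Ideal O :=
  Ideal.span {A 0 0, A 0 1, A 1 0, A 1 1}

/-- The second determinantal divisor `δ₂(A) = (det A)𝒪`. -/
def delta2 {O : Type*} [CommRing O] (A : Matrix (Fin 2) (Fin 2) O) : Ideal O :=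
  Ideal.span {A.det}

/-- The g.c.d. `𝔤(A)` of the first column of `A`. -/
def gcol {O : Type*} [CommRing O] (A : Matrix (Fin 2) (Fin 2) O) : Ideal O :=
  Ideal.span {A 0 0, A 1 0}

/-- `μ_𝔞(A)`: the number of right cosets `U·B` contained in `U A U` whose first column has
g.c.d. `𝔞`. -/
noncomputable def muIdeal {O : Type*} [CommRing O] (A : Matrix (Fin 2) (Fin 2) O)
    (𝔞 : Ideal O) : ℕ :=
  Nat.card {S : Set (Matrix (Fin 2) (Fin 2) O) //
    ∃ B, S = rightCoset' B ∧ S ⊆ doubleCoset' A ∧ gcol B = 𝔞}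

/-- `T` is a transversal of the quotient of ideals `I/J`: it consists of elements of `I` and
contains exactly one representative of each residue class of `I` modulo `J`. -/
def IsTransversal {O : Type*} [CommRing O] (I J : Ideal O) (T : Set O) : Prop :=
  T ⊆ (I : Set O) ∧ ∀ x ∈ I, ∃! t, t ∈ T ∧ x - t ∈ J

section Aux

variable {O : Type*} [CommRing O]

lemma mem_rightCoset_self (B : Matrix (Fin 2) (Fin 2) O) : B ∈ rightCoset' B :=
  ⟨1, by simp, by simp⟩

lemma rightCoset_mul_left {P B : Matrix (Fin 2) (Fin 2) O} (hP : IsUnit P.det) :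
    rightCoset' (P * B) = rightCoset' B := by
  ext X
  constructor
  · rintro ⟨Q, hQ, rfl⟩
    exact ⟨Q * P, by rw [Matrix.det_mul]; exact hQ.mul hP, by rw [Matrix.mul_assoc]⟩
  · rintro ⟨Q, hQ, rfl⟩
    refine ⟨Q * P⁻¹, ?_, ?_⟩
    · rw [Matrix.det_mul]
      exact hQ.mul (Matrix.isUnit_nonsing_inv_det P hP)
    · rw [Matrix.mul_assoc Q P⁻¹ (P * B), ← Matrix.mul_assoc P⁻¹ P B,
        Matrix.nonsing_inv_mul P hP, Matrix.one_mul]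

lemma rightCoset_subset_doubleCoset {A B : Matrix (Fin 2) (Fin 2) O}
    (hB : B ∈ doubleCoset' A) : rightCoset' B ⊆ doubleCoset' A := by
  obtain ⟨P, Q, hP, hQ, rfl⟩ := hB
  rintro X ⟨P', hP', rfl⟩
  exact ⟨P' * P, Q, by rw [Matrix.det_mul]; exact hP'.mul hP, hQ, by
    simp only [Matrix.mul_assoc]⟩

/-- Normalization: if the first column of `B` is unimodular, then the right coset of `B`
is the right coset of an upper triangular matrix `!![1, β; 0, det B]`. -/
lemma exists_triangular {B : Matrix (Fin 2) (Fin 2) O} (h : gcol B = ⊤) :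
    ∃ β : O, rightCoset' B = rightCoset' !![1, β; 0, B.det] := by
  have h1 : (1 : O) ∈ Ideal.span {B 0 0, B 1 0} := by rw [← gcol, h]; trivial
  obtain ⟨x, y, hxy⟩ := Ideal.mem_span_pair.mp h1
  refine ⟨x * B 0 1 + y * B 1 1, ?_⟩
  have key : !![x, y; -(B 1 0), B 0 0] * B = !![1, x * B 0 1 + y * B 1 1; 0, B.det] := by
    ext i j
    fin_cases i <;> fin_cases j <;>
      simp only [Matrix.mul_apply, Fin.sum_univ_two, Matrix.det_fin_two, Fin.isValue,
        Matrix.cons_val', Matrix.cons_val_zero, Matrix.cons_val_one, Matrix.head_cons,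
        Matrix.head_fin_const, Matrix.empty_val', Matrix.cons_val_fin_one, Matrix.of_apply,
        Fin.mk_zero, Fin.mk_one] <;>
      first
        | ring1
        | linear_combination hxy
  have hdP : (!![x, y; -(B 1 0), B 0 0]).det = 1 := by
    rw [Matrix.det_fin_two_of]; linear_combination hxy
  rw [← key, rightCoset_mul_left (by rw [hdP]; exact isUnit_one)]

lemma gcol_triangular (b d : O) : gcol !![1, b; 0, d] = ⊤ := by
  rw [gcol, Ideal.eq_top_iff_one]
  exact Ideal.subset_span (by simp)

end Aux

section Smith

variable {O : Type*} [CommRing O] [IsDomain O] [IsDedekindDomain O]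

/-- Per-prime good residue. -/
lemma good_residue (𝔭 : Ideal O) (h𝔭 : 𝔭.IsMaximal) (a b c d : O)
    (h : ¬(a ∈ 𝔭 ∧ b ∈ 𝔭 ∧ c ∈ 𝔭 ∧ d ∈ 𝔭)) :
    ∃ r : O ⧸ 𝔭, ¬(Ideal.Quotient.mk 𝔭 a * r + Ideal.Quotient.mk 𝔭 b = 0 ∧
      Ideal.Quotient.mk 𝔭 c * r + Ideal.Quotient.mk 𝔭 d = 0) := by
  haveI := h𝔭
  letI : Field (O ⧸ 𝔭) := Ideal.Quotient.field 𝔭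
  set qa := Ideal.Quotient.mk 𝔭 a with hqa
  set qb := Ideal.Quotient.mk 𝔭 b with hqb
  set qc := Ideal.Quotient.mk 𝔭 c with hqc
  set qd := Ideal.Quotient.mk 𝔭 d with hqd
  by_cases ha : qa = 0
  · by_cases hc : qc = 0
    · refine ⟨0, ?_⟩
      rintro ⟨hh1, hh2⟩
      simp only [mul_zero, zero_add] at hh1 hh2
      exact h ⟨Ideal.Quotient.eq_zero_iff_mem.mp ha, Ideal.Quotient.eq_zero_iff_mem.mp hh1,
        Ideal.Quotient.eq_zero_iff_mem.mp hc, Ideal.Quotient.eq_zero_iff_mem.mp hh2⟩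
    · refine ⟨qc⁻¹ * (1 - qd), ?_⟩
      rintro ⟨-, hh2⟩
      rw [← mul_assoc, mul_inv_cancel₀ hc, one_mul] at hh2
      simp at hh2
  · refine ⟨qa⁻¹ * (1 - qb), ?_⟩
    rintro ⟨hh1, -⟩
    rw [← mul_assoc, mul_inv_cancel₀ ha, one_mul] at hh1
    simp at hh1

lemma exists_t (A : Matrix (Fin 2) (Fin 2) O)
    (hfin : Finite (O ⧸ Ideal.span {A.det}))
    (h1 : delta1 A = ⊤) :
    ∃ t : O, Ideal.span {A 0 0 * t + A 0 1, A 1 0 * t + A 1 1} = ⊤ := by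
  classical
  set I : Ideal O := Ideal.span {A.det} with hI
  let ι := {𝔭 : Ideal O // 𝔭.IsMaximal ∧ A.det ∈ 𝔭}
  haveI : Finite (Ideal (O ⧸ I)) :=
    Finite.of_injective (fun J => (J : Set (O ⧸ I))) SetLike.coe_injective
  haveI : Finite ι := by
    refine Finite.of_injective (fun i : ι => Ideal.map (Ideal.Quotient.mk I) i.1) ?_
    intro i j hij
    have hcomp : ∀ k : ι, Ideal.comap (Ideal.Quotient.mk I)
        (Ideal.map (Ideal.Quotient.mk I) k.1) = k.1 := by
      intro k
      rw [Ideal.comap_map_of_surjective _ Ideal.Quotient.mk_surjective,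
        ← RingHom.ker_eq_comap_bot, Ideal.mk_ker, sup_eq_left]
      rw [hI, Ideal.span_le, Set.singleton_subset_iff]
      exact k.2.2
    have h2 := congrArg (Ideal.comap (Ideal.Quotient.mk I)) hij
    rw [hcomp i, hcomp j] at h2
    exact Subtype.ext h2
  have hnot : ∀ i : ι, ¬(A 0 0 ∈ i.1 ∧ A 0 1 ∈ i.1 ∧ A 1 0 ∈ i.1 ∧ A 1 1 ∈ i.1) := by
    rintro i ⟨ha, hb, hc, hd⟩
    have hle : delta1 A ≤ i.1 := by
      rw [delta1, Ideal.span_le]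
      intro x hx
      simp only [Set.mem_insert_iff, Set.mem_singleton_iff] at hx
      rcases hx with rfl | rfl | rfl | rfl <;> assumption
    rw [h1] at hle
    exact i.2.1.ne_top (top_le_iff.mp hle)
  choose χ hχ using fun i : ι =>
    good_residue i.1 i.2.1 (A 0 0) (A 0 1) (A 1 0) (A 1 1) (hnot i)
  have hco : Pairwise (Function.onFun IsCoprime fun i : ι => i.1) := fun i j hij =>
    Ideal.isCoprime_iff_sup_eq.mpr
      (Ideal.IsMaximal.coprime_of_ne i.2.1 j.2.1 (fun h => hij (Subtype.ext h)))
  obtain ⟨y, hy⟩ := Ideal.quotientInfToPiQuotient_surj hco χ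
  obtain ⟨t, rfl⟩ := Ideal.Quotient.mk_surjective y
  have ht : ∀ i : ι, Ideal.Quotient.mk i.1 t = χ i := fun i => by
    rw [← Ideal.quotientInfToPiQuotient_mk' _ t i, hy]
  refine ⟨t, ?_⟩
  by_contra hne
  obtain ⟨𝔪, h𝔪, hle⟩ := Ideal.exists_le_maximal _ hne
  have hα : A 0 0 * t + A 0 1 ∈ 𝔪 := hle (Ideal.subset_span (by simp))
  have hγ : A 1 0 * t + A 1 1 ∈ 𝔪 := hle (Ideal.subset_span (by simp))
  have hdet : A.det ∈ 𝔪 := by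
    have hd2 : A.det = A 0 0 * (A 1 0 * t + A 1 1) - A 1 0 * (A 0 0 * t + A 0 1) := by
      rw [Matrix.det_fin_two]; ring
    rw [hd2]
    exact Ideal.sub_mem _ (Ideal.mul_mem_left _ _ hγ) (Ideal.mul_mem_left _ _ hα)
  let i₀ : ι := ⟨𝔪, h𝔪, hdet⟩
  apply hχ i₀
  constructor
  · rw [← ht i₀, ← _root_.map_mul, ← map_add]
    exact Ideal.Quotient.eq_zero_iff_mem.mpr hα
  · rw [← ht i₀, ← _root_.map_mul, ← map_add]
    exact Ideal.Quotient.eq_zero_iff_mem.mpr hγ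

/-- Smith normal form for a matrix with `δ₁ = 𝒪`. -/
lemma exists_smith (A : Matrix (Fin 2) (Fin 2) O)
    (hfin : Finite (O ⧸ Ideal.span {A.det})) (h1 : delta1 A = ⊤) :
    ∃ P Q : Matrix (Fin 2) (Fin 2) O, IsUnit P.det ∧ IsUnit Q.det ∧
      P * A * Q = !![1, 0; 0, A.det] := by
  obtain ⟨t, ht⟩ := exists_t A hfin h1
  have h1' : (1 : O) ∈ Ideal.span {A 0 0 * t + A 0 1, A 1 0 * t + A 1 1} := by
    rw [ht]; trivial
  obtain ⟨x, y, hxy⟩ := Ideal.mem_span_pair.mp h1'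
  refine ⟨!![x, y; -(A 1 0 * t + A 1 1), A 0 0 * t + A 0 1],
    !![t, 1; 1, 0] * !![1, x * A 0 0 + y * A 1 0; 0, -1], ?_, ?_, ?_⟩
  · rw [Matrix.det_fin_two_of]
    have hd1 : x * (A 0 0 * t + A 0 1) - y * -(A 1 0 * t + A 1 1) = 1 := by
      linear_combination hxy
    rw [hd1]; exact isUnit_one
  · rw [Matrix.det_mul, Matrix.det_fin_two_of, Matrix.det_fin_two_of]
    have hd2 : (t * 0 - 1 * 1) * (1 * -1 - (x * A 0 0 + y * A 1 0) * 0) = (1 : O) := by ring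
    rw [hd2]; exact isUnit_one
  · ext i j
    fin_cases i <;> fin_cases j <;>
      simp only [Matrix.mul_apply, Fin.sum_univ_two, Matrix.det_fin_two, Fin.isValue,
        Matrix.cons_val', Matrix.cons_val_zero, Matrix.cons_val_one, Matrix.head_cons,
        Matrix.head_fin_const, Matrix.empty_val', Matrix.cons_val_fin_one, Matrix.of_apply,
        Fin.mk_zero, Fin.mk_one] <;>
      first
        | ring1
        | linear_combination hxy
        | linear_combination (x * A 0 0 + y * A 1 0) * hxy

end Smith

theorem stmt16 {O : Type*} [CommRing O] [IsDomain O] [IsDedekindDomain O]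
    -- `𝒪` is norm-finite:
    (hnf : ∀ x : O, x ≠ 0 → Finite (O ⧸ Ideal.span {x}))
    (A : Matrix (Fin 2) (Fin 2) O) (hA : A.det ≠ 0)
    (h1 : delta1 A = ⊤) :
    muIdeal A ⊤ = Nat.card (O ⧸ delta2 A) := by
  classical
  have hfin : Finite (O ⧸ Ideal.span {A.det}) := hnf A.det hA
  obtain ⟨P, Q, hP, hQ, hPQ⟩ := exists_smith A hfin h1
  -- triangular matrices with the right determinant lie in the double coset
  have htri : ∀ b : O, !![1, b; 0, A.det] ∈ doubleCoset' A := by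
    intro b
    refine ⟨P, Q * !![1, b; 0, 1], hP, ?_, ?_⟩
    · rw [Matrix.det_mul, Matrix.det_fin_two_of]
      have h' : (1 * 1 - b * 0 : O) = 1 := by ring
      rw [h', mul_one]; exact hQ
    · rw [← Matrix.mul_assoc, hPQ]
      ext i j
      fin_cases i <;> fin_cases j <;>
        simp only [Matrix.mul_apply, Fin.sum_univ_two, Fin.isValue,
          Matrix.cons_val', Matrix.cons_val_zero, Matrix.cons_val_one, Matrix.head_cons,
          Matrix.head_fin_const, Matrix.empty_val', Matrix.cons_val_fin_one, Matrix.of_apply,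
          Fin.mk_zero, Fin.mk_one] <;>
        ring1
  -- the map from O to the set of cosets
  let F : O → {S : Set (Matrix (Fin 2) (Fin 2) O) //
      ∃ B, S = rightCoset' B ∧ S ⊆ doubleCoset' A ∧ gcol B = ⊤} :=
    fun b => ⟨rightCoset' !![1, b; 0, A.det], !![1, b; 0, A.det], rfl,
      rightCoset_subset_doubleCoset (htri b), gcol_triangular b A.det⟩
  -- soundness
  have hsound : ∀ b b' : O, b - b' ∈ Ideal.span {A.det} → F b = F b' := by
    intro b b' hbb
    obtain ⟨q, hq⟩ := Ideal.mem_span_singleton'.mp hbb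
    apply Subtype.ext
    show rightCoset' !![1, b; 0, A.det] = rightCoset' !![1, b'; 0, A.det]
    have hkey : !![1, q; 0, 1] * !![1, b'; 0, A.det] = !![1, b; 0, A.det] := by
      ext i j
      fin_cases i <;> fin_cases j <;>
        simp only [Matrix.mul_apply, Fin.sum_univ_two, Fin.isValue,
          Matrix.cons_val', Matrix.cons_val_zero, Matrix.cons_val_one, Matrix.head_cons,
          Matrix.head_fin_const, Matrix.empty_val', Matrix.cons_val_fin_one, Matrix.of_apply,
          Fin.mk_zero, Fin.mk_one] <;>
        first
          | ring1
          | linear_combination hq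
    rw [← hkey, rightCoset_mul_left]
    rw [Matrix.det_fin_two_of]
    have h' : (1 * 1 - q * 0 : O) = 1 := by ring
    rw [h']; exact isUnit_one
  -- injectivity
  have hinj : ∀ b b' : O, F b = F b' → b - b' ∈ Ideal.span {A.det} := by
    intro b b' hFb
    have hmem : !![1, b; 0, A.det] ∈ rightCoset' !![1, b'; 0, A.det] := by
      have h' : rightCoset' !![1, b; 0, A.det] = rightCoset' !![1, b'; 0, A.det] :=
        congrArg Subtype.val hFb
      rw [← h']
      exact mem_rightCoset_self _
    obtain ⟨R, hR, hEq⟩ := hmem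
    have h00 := congrFun (congrFun hEq 0) 0
    have h01 := congrFun (congrFun hEq 0) 1
    simp only [Matrix.mul_apply, Fin.sum_univ_two, Fin.isValue,
      Matrix.cons_val', Matrix.cons_val_zero, Matrix.cons_val_one, Matrix.head_cons,
      Matrix.head_fin_const, Matrix.empty_val', Matrix.cons_val_fin_one, Matrix.of_apply,
      Fin.mk_zero, Fin.mk_one] at h00 h01
    rw [Ideal.mem_span_singleton']
    exact ⟨R 0 1, by linear_combination b' * h00 - h01⟩
  -- surjectivity
  have hsurj : ∀ s : {S : Set (Matrix (Fin 2) (Fin 2) O) //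
      ∃ B, S = rightCoset' B ∧ S ⊆ doubleCoset' A ∧ gcol B = ⊤}, ∃ b, F b = s := by
    rintro ⟨S, B, rfl, hsub, hg⟩
    obtain ⟨β, hβ⟩ := exists_triangular hg
    obtain ⟨P', Q', hP', hQ', hB⟩ := hsub (mem_rightCoset_self B)
    have hu : IsUnit (P'.det * Q'.det) := hP'.mul hQ'
    obtain ⟨w, hw⟩ := hu
    have hBdet : B.det = (P'.det * Q'.det) * A.det := by
      rw [hB, Matrix.det_mul, Matrix.det_mul]; ring
    have hvw : ((w⁻¹ : Oˣ) : O) * (P'.det * Q'.det) = 1 := by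
      rw [← hw, ← Units.val_mul, inv_mul_cancel, Units.val_one]
    refine ⟨β, Subtype.ext ?_⟩
    show rightCoset' !![1, β; 0, A.det] = rightCoset' B
    rw [hβ]
    have hkey : !![1, 0; 0, ((w⁻¹ : Oˣ) : O)] * !![1, β; 0, B.det]
        = !![1, β; 0, A.det] := by
      ext i j
      fin_cases i <;> fin_cases j <;>
        simp only [Matrix.mul_apply, Fin.sum_univ_two, Fin.isValue,
          Matrix.cons_val', Matrix.cons_val_zero, Matrix.cons_val_one, Matrix.head_cons,
          Matrix.head_fin_const, Matrix.empty_val', Matrix.cons_val_fin_one, Matrix.of_apply,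
          Fin.mk_zero, Fin.mk_one] <;>
        first
          | ring1
          | linear_combination ((w⁻¹ : Oˣ) : O) * hBdet + A.det * hvw
    rw [← hkey, rightCoset_mul_left]
    rw [Matrix.det_fin_two_of]
    have h' : (1 * ((w⁻¹ : Oˣ) : O) - 0 * 0 : O) = ((w⁻¹ : Oˣ) : O) := by ring
    rw [h']
    exact (w⁻¹).isUnit
  -- build the bijection from the quotient
  let G : (O ⧸ Ideal.span {A.det}) → {S : Set (Matrix (Fin 2) (Fin 2) O) //
      ∃ B, S = rightCoset' B ∧ S ⊆ doubleCoset' A ∧ gcol B = ⊤} :=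
    fun z => Quotient.liftOn' z F (fun a b h =>
      hsound a b ((Submodule.quotientRel_def _).mp h))
  have hGmk : ∀ b : O, G (Ideal.Quotient.mk (Ideal.span {A.det}) b) = F b := fun b => rfl
  have hGbij : Function.Bijective G := by
    constructor
    · intro z z' hzz
      obtain ⟨b, rfl⟩ := Ideal.Quotient.mk_surjective z
      obtain ⟨b', rfl⟩ := Ideal.Quotient.mk_surjective z'
      rw [hGmk, hGmk] at hzz
      exact Ideal.Quotient.eq.mpr (hinj b b' hzz)
    · intro s
      obtain ⟨b, hb⟩ := hsurj s
      exact ⟨Ideal.Quotient.mk (Ideal.span {A.det}) b, by rw [hGmk]; exact hb⟩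
  have hcard := Nat.card_eq_of_bijective G hGbij
  rw [muIdeal, delta2]
  exact hcard.symm
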